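/- Let M = F_{p^m}, p odd, m even, q = p^k with m/gcd(k,m) odd. Let f, g : M → M be functions and suppose for each w ∈ M there is u_w ∈ M with f(x^q u_w + x u_w^q) = (g(x))^q w + g(x) w^q for all x ∈ M. Then either g = 0 or the map w ↦ u_w is a bijection of M. -/
import Mathlib

lemma aux_char (p m : ℕ) (hp : p.Prime) (hm0 : 0 < m)
    (F : Type) [Field F] [Fintype F] (hF : Fintype.card F = p ^ m) :
    CharP F p := by
  obtain ⟨n, hr, hcard⟩ := FiniteField.card F (ringChar F)
  have hrp : ringChar F = p := by
    have hdvd : ringChar F ∣ p ^ m := by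
      rw [← hF, hcard]
      exact dvd_pow_self _ (by positivity)
    exact (Nat.prime_dvd_prime_iff_eq hr hp).mp (hr.dvd_of_dvd_pow hdvd)
  exact ringChar.of_eq hrp

lemma aux_zero (p m k : ℕ) (hp : p.Prime) (hodd : Odd p) (hm0 : 0 < m)
    (hko : Odd (m / Nat.gcd k m))
    (F : Type) [Field F] [Fintype F] (hF : Fintype.card F = p ^ m)
    (t : F) (ht : t ^ p ^ k = -t) : t = 0 := by
  haveI := aux_char p m hp hm0 F hF
  have hpk : Odd (p ^ k) := hodd.pow
  have hpm : ∀ s : F, s ^ p ^ m = s := fun s => hF ▸ FiniteField.pow_card s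
  have hmult : ∀ b : ℕ, t ^ p ^ (b * m) = t := by
    intro b
    induction b with
    | zero => simp
    | succ b ih =>
      have : (b + 1) * m = b * m + m := by ring
      rw [this, pow_add, pow_mul, ih, hpm]
  have halt : ∀ a : ℕ, t ^ p ^ (a * k) = (-1) ^ a * t := by
    intro a
    induction a with
    | zero => simp
    | succ a ih =>
      have h1 : (a + 1) * k = a * k + k := by ring
      rw [h1, pow_add, pow_mul, ih, mul_pow, ht, ← pow_mul,
        mul_comm a (p ^ k), pow_mul, hpk.neg_one_pow, pow_succ]
      ring
  -- set d := gcd k m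
  set d := Nat.gcd k m with hd
  have hdpos : 0 < d := Nat.gcd_pos_of_pos_right _ hm0
  obtain ⟨k', hk'⟩ : d ∣ k := Nat.gcd_dvd_left k m
  obtain ⟨m', hm'⟩ : d ∣ m := Nat.gcd_dvd_right k m
  have ha : m / d = m' := Nat.div_eq_of_eq_mul_right hdpos hm'
  have hmk : m' * k = k' * m := by rw [hk', hm']; ring
  have h1 : t ^ p ^ (m' * k) = t := by rw [hmk, hmult]
  have h2 : t ^ p ^ (m' * k) = -t := by
    rw [halt, (ha ▸ hko : Odd m').neg_one_pow]; ring
  have hteq : t = -t := h1.symm.trans h2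
  have h2t : (2 : F) * t = 0 := by linear_combination hteq
  have h2ne : (2 : F) ≠ 0 := by
    intro h20
    have : ((2 : ℕ) : F) = 0 := by push_cast; exact h20
    have hdvd : p ∣ 2 := (CharP.cast_eq_zero_iff F p 2).mp this
    have hp2 : p = 2 := (Nat.prime_dvd_prime_iff_eq hp Nat.prime_two).mp hdvd
    rw [Nat.odd_iff] at hodd; omega
  exact (mul_eq_zero.mp h2t).resolve_left h2ne

theorem stmt_9 (p m k : ℕ) (hp : p.Prime) (hodd : Odd p) (hm : Even m) (hm0 : 0 < m)
    (hk1 : 1 ≤ k) (hk2 : k ≤ m - 1) (hko : Odd (m / Nat.gcd k m))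
    (F : Type) [Field F] [Fintype F] (hF : Fintype.card F = p ^ m)
    (f g : F → F) (u : F → F)
    (h : ∀ w x : F,
      f (x ^ p ^ k * u w + x * (u w) ^ p ^ k) = (g x) ^ p ^ k * w + g x * w ^ p ^ k) :
    (∀ x, g x = 0) ∨ Function.Bijective u := by
  haveI := aux_char p m hp hm0 F hF
  haveI : Fact p.Prime := ⟨hp⟩
  by_cases hg : ∀ x, g x = 0
  · exact Or.inl hg
  right
  push_neg at hg
  obtain ⟨x₀, hx₀⟩ := hg
  rw [← Finite.injective_iff_bijective]
  intro w₁ w₂ huw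
  have heq : (g x₀) ^ p ^ k * w₁ + g x₀ * w₁ ^ p ^ k
      = (g x₀) ^ p ^ k * w₂ + g x₀ * w₂ ^ p ^ k := by
    rw [← h w₁ x₀, ← h w₂ x₀, huw]
  set c := g x₀ with hc
  set s := w₁ - w₂ with hs
  by_contra hne
  have hsne : s ≠ 0 := sub_ne_zero.mpr hne
  have hkey : c ^ p ^ k * s + c * s ^ p ^ k = 0 := by
    have hfrob : s ^ p ^ k = w₁ ^ p ^ k - w₂ ^ p ^ k := sub_pow_char_pow ..
    rw [hs, hfrob]
    linear_combination heq
  set t := c / s with htdef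
  have htne : t ≠ 0 := div_ne_zero hx₀ hsne
  have ht : t ^ p ^ k = -t := by
    have hsq : (s : F) ^ p ^ k ≠ 0 := pow_ne_zero _ hsne
    rw [htdef, div_pow, div_eq_iff hsq, neg_mul, div_mul_eq_mul_div,
      ← neg_div, eq_div_iff hsne]
    linear_combination hkey
  exact htne (aux_zero p m k hp hodd hm0 hko F hF t ht)
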